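/- Let n, g, k be positive integers with g ≥ 2 and k = n/g ∈ ℕ, let p be a real-valued trigonometric polynomial, let p_{n,g}^k = C_n(p) Z_{n,g}^k, and assume p_{n,g}^k has full column rank. Let W_n(p) = I_n − p_{n,g}^k [(p_{n,g}^k)^H p_{n,g}^k]^{-1} (p_{n,g}^k)^H. For μ = 0,…,k−1 let p[μ] ∈ ℝ^g be the vector with entries p(2π(μ + rk)/n), r = 0,…,g−1 (the values of p on the g-corners Ω_g(2πμ/n)). Then there is a permutation matrix Π of size n such that Π^T F_n^H W_n(p) F_n Π is the block diagonal matrix whose μ-th g×g diagonal block is I_g − p[μ] p[μ]^T / ‖p[μ]‖₂², for μ = 0,…,k−1. -/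

import Mathlib

open Matrix Complex
open scoped Matrix ComplexConjugate

noncomputable section

/-- The Fourier matrix of size `n`: `F_n = (1/√n)[e^{-2πijk/n}]_{j,k=0}^{n-1}`. -/
def fourierMatrix (n : ℕ) : Matrix (Fin n) (Fin n) ℂ :=
  Matrix.of fun j k : Fin n =>
    (((Real.sqrt n : ℝ) : ℂ))⁻¹ *
      Complex.exp (-(2 * (Real.pi : ℂ) * Complex.I * ((j : ℕ) : ℂ) * ((k : ℕ) : ℂ)) / (n : ℂ))

/-- The cutting matrix `Z_{n,g}^k`: `[Z]_{i,j} = 1` if `i ≡ g·j (mod n)`, else `0`. -/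
def cuttingMatrix (n g k : ℕ) : Matrix (Fin n) (Fin k) ℂ :=
  Matrix.of fun (i : Fin n) (j : Fin k) =>
    if (((i : ℕ) : ZMod n) = ((g * (j : ℕ) : ℕ) : ZMod n)) then (1 : ℂ) else 0

/-- A real-valued function is a trigonometric polynomial: a finite sum `∑_{|j|≤c} a_j e^{ijx}`. -/
def IsTrigPolyR (f : ℝ → ℝ) : Prop :=
  ∃ (c : ℕ) (a : ℤ → ℂ), ∀ x : ℝ,
    (f x : ℂ) = ∑ j ∈ Finset.Icc (-(c : ℤ)) (c : ℤ), a j * Complex.exp (Complex.I * (j : ℂ) * (x : ℂ))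

/-- The circulant matrix generated by a real-valued `f`:
`C_n(f) = F_n · diag_{j}(f(2πj/n)) · F_nᴴ`. -/
def circulantGenR (n : ℕ) (f : ℝ → ℝ) : Matrix (Fin n) (Fin n) ℂ :=
  fourierMatrix n *
    Matrix.diagonal (fun j : Fin n => ((f (2 * Real.pi * (j : ℕ) / n) : ℝ) : ℂ)) *
    (fourierMatrix n)ᴴ

lemma sum_exp_orth (k : ℕ) (hk : 0 < k) (m : ℤ) :
    ∑ l : Fin k, Complex.exp (2 * (Real.pi:ℂ) * Complex.I * m * l / k)
      = if (k : ℤ) ∣ m then (k : ℂ) else 0 := by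
  set z : ℂ := Complex.exp (2 * (Real.pi:ℂ) * Complex.I * m / k) with hz
  have hzl : ∀ l : ℕ, Complex.exp (2 * (Real.pi:ℂ) * Complex.I * m * l / k) = z ^ l := by
    intro l
    rw [hz, ← Complex.exp_nat_mul]
    congr 1
    ring
  have hz1 : z = 1 ↔ (k : ℤ) ∣ m := by
    rw [hz, Complex.exp_eq_one_iff]
    constructor
    · rintro ⟨t, ht⟩
      refine ⟨t, ?_⟩
      have hπ : (Real.pi : ℂ) ≠ 0 := by exact_mod_cast Real.pi_ne_zero
      have hkne : (k : ℂ) ≠ 0 := by exact_mod_cast hk.ne'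
      have h2 : (2:ℂ) * Real.pi * Complex.I ≠ 0 := by
        simp [hπ, Complex.I_ne_zero]
      have ht' : (2:ℂ) * Real.pi * Complex.I * ((m:ℂ)/k)
          = (2:ℂ) * Real.pi * Complex.I * t := by linear_combination ht
      have hmk : (m:ℂ)/k = t := mul_left_cancel₀ h2 ht'
      have : (m : ℂ) = k * t := by
        rw [div_eq_iff hkne] at hmk; rw [hmk]; ring
      exact_mod_cast this
    · rintro ⟨t, rfl⟩
      refine ⟨t, ?_⟩
      have hkne : (k : ℂ) ≠ 0 := by exact_mod_cast hk.ne'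
      field_simp
      push_cast
      ring
  simp only [hzl]
  rw [Fin.sum_univ_eq_sum_range (fun l => z ^ l)]
  by_cases hd : (k : ℤ) ∣ m
  · rw [if_pos hd]
    have : z = 1 := hz1.mpr hd
    simp [this]
  · rw [if_neg hd]
    have hzne : z ≠ 1 := fun h => hd (hz1.mp h)
    rw [geom_sum_eq hzne]
    have : z ^ k = 1 := by
      rw [hz, ← Complex.exp_nat_mul]
      have hkne : (k : ℂ) ≠ 0 := by exact_mod_cast hk.ne'
      have : (k:ℂ) * (2 * (Real.pi:ℂ) * Complex.I * m / k) = m * (2 * Real.pi * Complex.I) := by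
        field_simp
      rw [this]
      exact_mod_cast Complex.exp_int_mul_two_pi_mul_I m
    simp [this]

/-- conjugate-Fourier-type matrix with + sign. -/
def Gmat (N : ℕ) : Matrix (Fin N) (Fin N) ℂ :=
  Matrix.of fun a b : Fin N =>
    (((Real.sqrt N : ℝ) : ℂ))⁻¹ * Complex.exp (2 * (Real.pi:ℂ) * Complex.I * a * b / N)

lemma fin_dvd_iff (N : ℕ) (a b : Fin N) : (N : ℤ) ∣ ((b : ℤ) - (a : ℤ)) ↔ a = b := by
  constructor
  · rintro ⟨t, ht⟩
    have ha : ((a:ℕ):ℤ) < N := by exact_mod_cast a.isLt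
    have hb : ((b:ℕ):ℤ) < N := by exact_mod_cast b.isLt
    have ha0 : (0:ℤ) ≤ (a:ℕ) := by positivity
    have hb0 : (0:ℤ) ≤ (b:ℕ) := by positivity
    have h1 : |((b:ℕ):ℤ) - (a:ℕ)| < N := by rw [abs_lt]; omega
    rw [ht, abs_mul, abs_of_nonneg (by positivity : (0:ℤ) ≤ (N:ℤ))] at h1
    have hN : (0:ℤ) < N := by omega
    have ht1 : |t| < 1 := by
      by_contra hcon
      push_neg at hcon
      nlinarith
    have ht0 : t = 0 := by rw [abs_lt] at ht1; omega
    rw [ht0, mul_zero] at ht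
    exact Fin.ext (by omega)
  · rintro rfl; simp

lemma sqrt_inv_sq (N : ℕ) (hN : 0 < N) :
    (((Real.sqrt N : ℝ) : ℂ))⁻¹ * (((Real.sqrt N : ℝ) : ℂ))⁻¹ * N = 1 := by
  have h : (Real.sqrt N) * (Real.sqrt N) = (N:ℝ) := Real.mul_self_sqrt (by positivity)
  have hne : ((Real.sqrt N : ℝ) : ℂ) ≠ 0 := by
    simp only [ne_eq, Complex.ofReal_eq_zero]
    positivity
  field_simp
  rw [sq, ← Complex.ofReal_mul, h]
  norm_cast

lemma star_sqrt_inv (N : ℕ) :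
    (starRingEnd ℂ) ((((Real.sqrt N : ℝ) : ℂ))⁻¹) = (((Real.sqrt N : ℝ) : ℂ))⁻¹ := by
  simp [star_inv₀, Complex.star_def, Complex.conj_ofReal]

lemma conj_exp_real (x : ℝ) (a b : ℕ) (N : ℕ) :
    (starRingEnd ℂ) (Complex.exp (2 * (x:ℂ) * Complex.I * a * b / N))
      = Complex.exp (-(2 * (x:ℂ) * Complex.I * a * b / N)) := by
  rw [← Complex.exp_conj]
  congr 1
  simp only [map_div₀, map_neg, _root_.map_mul, Complex.conj_I, Complex.conj_ofReal,
    Complex.conj_natCast, map_ofNat]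
  ring

lemma Gmat_mul_conjT (N : ℕ) (hN : 0 < N) : Gmat N * (Gmat N)ᴴ = 1 := by
  ext a b
  rw [Matrix.mul_apply]
  have hc : ∀ i : Fin N, Gmat N a i * (Gmat N)ᴴ i b
      = (((Real.sqrt N : ℝ) : ℂ))⁻¹ * (((Real.sqrt N : ℝ) : ℂ))⁻¹ *
          Complex.exp (2 * (Real.pi:ℂ) * Complex.I * (((a:ℤ) - (b:ℤ)):ℤ) * i / N) := by
    intro i
    simp only [Gmat, Matrix.conjTranspose_apply, Matrix.of_apply, star_mul', Complex.star_def]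
    rw [conj_exp_real Real.pi b i N, star_sqrt_inv, mul_mul_mul_comm, ← Complex.exp_add]
    congr 2
    push_cast
    ring
  rw [Finset.sum_congr rfl fun i _ => hc i, ← Finset.mul_sum,
    sum_exp_orth N hN ((a:ℤ) - (b:ℤ))]
  by_cases hab : a = b
  · subst hab
    rw [if_pos (by simp), sqrt_inv_sq N hN, Matrix.one_apply_eq]
  · have hnd : ¬ (N:ℤ) ∣ ((a:ℤ) - (b:ℤ)) := by
      rw [show (a:ℤ)-(b:ℤ) = -((b:ℤ)-(a:ℤ)) by ring, dvd_neg, fin_dvd_iff]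
      exact hab
    rw [if_neg hnd, Matrix.one_apply_ne hab, mul_zero]

lemma conjT_mul_Gmat (N : ℕ) (hN : 0 < N) : (Gmat N)ᴴ * Gmat N = 1 :=
  mul_eq_one_comm.mp (Gmat_mul_conjT N hN)

lemma fourier_eq_Gmat (n : ℕ) : fourierMatrix n = (Gmat n)ᴴ := by
  ext j l
  simp only [fourierMatrix, Gmat, Matrix.conjTranspose_apply, Matrix.of_apply, star_mul',
    Complex.star_def]
  rw [star_sqrt_inv, conj_exp_real Real.pi l j n]
  congr 1
  push_cast
  ring

def splitIdx (g k : ℕ) (hg : 0 < g) (hk : 0 < k) : Fin (g * k) ≃ Fin k × Fin g where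
  toFun j := (⟨(j : ℕ) % k, Nat.mod_lt _ hk⟩,
    ⟨(j : ℕ) / k, by
      rw [Nat.div_lt_iff_lt_mul hk]
      exact j.isLt⟩)
  invFun x := ⟨(x.1 : ℕ) + (x.2 : ℕ) * k, by
    calc (x.1 : ℕ) + (x.2 : ℕ) * k < k + (x.2 : ℕ) * k := by omega
    _ = ((x.2 : ℕ) + 1) * k := by ring
    _ ≤ g * k := Nat.mul_le_mul_right k x.2.isLt⟩
  left_inv j := by
    apply Fin.ext
    simp only
    exact Nat.mod_add_div' _ _
  right_inv x := by
    ext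
    · simp only
      rw [Nat.add_mul_mod_self_right, Nat.mod_eq_of_lt x.1.isLt]
    · simp only
      rw [Nat.add_mul_div_right _ _ hk, Nat.div_eq_of_lt x.1.isLt, Nat.zero_add]

lemma exp_eq_of_int_diff (x y : ℂ) (t : ℤ) (h : x = y + t * (2 * (Real.pi:ℂ) * Complex.I)) :
    Complex.exp x = Complex.exp y := by
  rw [h, Complex.exp_add, Complex.exp_int_mul_two_pi_mul_I, mul_one]

def Rmat (n g k : ℕ) : Matrix (Fin n) (Fin k) ℂ :=
  Matrix.of fun (j : Fin n) (μ : Fin k) =>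
    if (j : ℕ) % k = (μ : ℕ) then (((Real.sqrt g : ℝ):ℂ))⁻¹ else 0

lemma FHZ_eq (n g k : ℕ) (hg : 0 < g) (hk : 0 < k) (hn : n = g * k) :
    (fourierMatrix n)ᴴ * cuttingMatrix n g k = Rmat n g k * Gmat k := by
  have hn0 : 0 < n := hn ▸ Nat.mul_pos hg hk
  have hFH : (fourierMatrix n)ᴴ = Gmat n := by
    rw [fourier_eq_Gmat, Matrix.conjTranspose_conjTranspose]
  ext j l
  rw [hFH, Matrix.mul_apply, Matrix.mul_apply]
  -- RHS
  have hμ0 : ((j : ℕ) % k) < k := Nat.mod_lt _ hk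
  set μ0 : Fin k := ⟨(j : ℕ) % k, hμ0⟩ with hμ0def
  have hRHS : ∑ μ : Fin k, Rmat n g k j μ * Gmat k μ l
      = (((Real.sqrt g : ℝ):ℂ))⁻¹ * ((((Real.sqrt k : ℝ):ℂ))⁻¹ *
          Complex.exp (2 * (Real.pi:ℂ) * Complex.I * ((((j:ℕ) % k : ℕ)) : ℂ) * l / k)) := by
    rw [Finset.sum_eq_single μ0]
    · simp only [Rmat, Gmat, Matrix.of_apply]
      rw [if_pos rfl]
    · intro μ _ hμ
      simp only [Rmat, Matrix.of_apply]
      rw [if_neg, zero_mul]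
      intro hc
      exact hμ (Fin.ext hc.symm) |>.elim
    · intro h; exact absurd (Finset.mem_univ μ0) h
  rw [hRHS]
  -- LHS
  have hi0 : (g * (l:ℕ)) % n < n := Nat.mod_lt _ hn0
  set i0 : Fin n := ⟨(g * (l:ℕ)) % n, hi0⟩ with hi0def
  have hLHS : ∑ i : Fin n, Gmat n j i * cuttingMatrix n g k i l
      = (((Real.sqrt n : ℝ):ℂ))⁻¹ *
          Complex.exp (2 * (Real.pi:ℂ) * Complex.I * (j:ℕ) * ((((g * (l:ℕ)) % n : ℕ)) : ℂ) / n) := by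
    rw [Finset.sum_eq_single i0]
    · simp only [Gmat, cuttingMatrix, Matrix.of_apply]
      have hcond : (((i0 : Fin n):ℕ) : ZMod n) = ((g * (l:ℕ) : ℕ) : ZMod n) := by
        rw [hi0def]
        rw [ZMod.natCast_eq_natCast_iff, Nat.ModEq]
        simp [Nat.mod_mod]
      rw [if_pos hcond, mul_one]
    · intro i _ hi
      simp only [cuttingMatrix, Matrix.of_apply]
      rw [if_neg, mul_zero]
      intro hc
      rw [ZMod.natCast_eq_natCast_iff, Nat.ModEq, Nat.mod_eq_of_lt i.isLt] at hc
      exact hi (Fin.ext hc)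
    · intro h; exact absurd (Finset.mem_univ i0) h
  rw [hLHS]
  -- now the two closed forms are equal
  have hsqrt : (((Real.sqrt n : ℝ):ℂ))⁻¹
      = (((Real.sqrt g : ℝ):ℂ))⁻¹ * (((Real.sqrt k : ℝ):ℂ))⁻¹ := by
    rw [hn]
    push_cast [Real.sqrt_mul (by positivity : (0:ℝ) ≤ (g:ℝ))]
    rw [mul_inv]
  rw [hsqrt]
  have hexp : Complex.exp (2 * (Real.pi:ℂ) * Complex.I * (j:ℕ) * ((((g * (l:ℕ)) % n : ℕ)) : ℂ) / n)
      = Complex.exp (2 * (Real.pi:ℂ) * Complex.I * ((((j:ℕ) % k : ℕ)) : ℂ) * l / k) := by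
    obtain ⟨q, hq⟩ : ∃ q, n * q + (g * (l:ℕ)) % n = g * (l:ℕ) := ⟨_, Nat.div_add_mod _ _⟩
    obtain ⟨dd, hd⟩ : ∃ d, k * d + (j:ℕ) % k = (j:ℕ) := ⟨_, Nat.div_add_mod _ _⟩
    have hm : ((((g * (l:ℕ)) % n : ℕ)) : ℂ) = (g:ℂ) * (l:ℕ) - (n:ℂ) * q := by
      have := congrArg (fun x : ℕ => (x : ℂ)) hq
      push_cast at this
      linear_combination this
    have hjr : ((((j:ℕ) % k : ℕ)) : ℂ) = ((j:ℕ):ℂ) - (k:ℂ) * dd := by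
      have := congrArg (fun x : ℕ => (x : ℂ)) hd
      push_cast at this
      linear_combination this
    apply exp_eq_of_int_diff _ _ ((dd : ℤ) * (l:ℕ) - ((j:ℕ) : ℤ) * q)
    have hnC : (n:ℂ) = (g:ℂ) * (k:ℂ) := by rw [hn]; push_cast; ring
    have hgC : (g:ℂ) ≠ 0 := by exact_mod_cast hg.ne'
    have hkC : (k:ℂ) ≠ 0 := by exact_mod_cast hk.ne'
    rw [hm, hjr, hnC]
    push_cast
    field_simp
    ring
  rw [hexp]
  ring

def Dmat (n : ℕ) (p : ℝ → ℝ) : Matrix (Fin n) (Fin n) ℂ :=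
  Matrix.diagonal (fun j : Fin n => ((p (2 * Real.pi * (j : ℕ) / n) : ℝ) : ℂ))

def sval (n g k : ℕ) (p : ℝ → ℝ) (μ : Fin k) : ℝ :=
  ∑ r : Fin g, (p (2 * Real.pi * (((μ:ℕ):ℝ) + ((r:ℕ):ℝ) * (k:ℝ)) / n))^2

lemma factorP (n g k : ℕ) (hg : 0 < g) (hk : 0 < k) (hn : n = g * k) (p : ℝ → ℝ) :
    circulantGenR n p * cuttingMatrix n g k
      = fourierMatrix n * (Dmat n p * (Rmat n g k * Gmat k)) := by
  show fourierMatrix n * Dmat n p * (fourierMatrix n)ᴴ * cuttingMatrix n g k = _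
  rw [Matrix.mul_assoc (fourierMatrix n * Dmat n p), FHZ_eq n g k hg hk hn,
    Matrix.mul_assoc]

lemma Rmat_conjT_apply (n g k : ℕ) (μ : Fin k) (j : Fin n) :
    (Rmat n g k)ᴴ μ j = Rmat n g k j μ := by
  simp only [Matrix.conjTranspose_apply, Rmat, Matrix.of_apply]
  split
  · rw [Complex.star_def]
    exact star_sqrt_inv g
  · exact star_zero ℂ

lemma splitIdx_symm_val (g k : ℕ) (hg : 0 < g) (hk : 0 < k) (x : Fin k × Fin g) :
    (((splitIdx g k hg hk).symm x : Fin (g*k)) : ℕ) = (x.1 : ℕ) + (x.2 : ℕ) * k := rfl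

lemma RDDR (n g k : ℕ) (hg : 0 < g) (hk : 0 < k) (hn : n = g * k) (p : ℝ → ℝ) :
    (Rmat n g k)ᴴ * (Dmat n p * (Dmat n p * Rmat n g k))
      = Matrix.diagonal (fun μ : Fin k => (((g:ℕ):ℂ))⁻¹ * ((sval n g k p μ : ℝ) : ℂ)) := by
  have hgC : ((g:ℕ):ℂ) ≠ 0 := by exact_mod_cast hg.ne'
  have hcg : (((Real.sqrt g:ℝ):ℂ))⁻¹ * (((Real.sqrt g:ℝ):ℂ))⁻¹ = (((g:ℕ):ℂ))⁻¹ :=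
    eq_inv_of_mul_eq_one_left (sqrt_inv_sq g hg)
  ext μ ν
  rw [Matrix.mul_apply]
  set pc : Fin n → ℂ := fun j => ((p (2 * Real.pi * (j : ℕ) / n) : ℝ) : ℂ) with hpc
  have hterm : ∀ j : Fin n, (Rmat n g k)ᴴ μ j * (Dmat n p * (Dmat n p * Rmat n g k)) j ν
      = ((if (j:ℕ) % k = (μ:ℕ) then (1:ℂ) else 0) * (if (j:ℕ) % k = (ν:ℕ) then (1:ℂ) else 0)) *
        ((((g:ℕ):ℂ))⁻¹ * (pc j)^2) := by
    intro j
    rw [Rmat_conjT_apply]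
    simp only [Dmat, Matrix.diagonal_mul, Rmat, Matrix.of_apply, hpc]
    by_cases h1 : (j:ℕ) % k = (μ:ℕ) <;> by_cases h2 : (j:ℕ) % k = (ν:ℕ) <;>
      simp [h1, h2] <;> rw [← hcg] <;> ring
  rw [Finset.sum_congr rfl fun j _ => hterm j]
  set e := (finCongr hn).trans (splitIdx g k hg hk) with he
  have hval : ∀ x : Fin k × Fin g, ((e.symm x : Fin n) : ℕ) = (x.1 : ℕ) + (x.2 : ℕ) * k :=
    fun x => rfl
  have hmod : ∀ x : Fin k × Fin g, ((e.symm x : Fin n) : ℕ) % k = (x.1 : ℕ) := by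
    intro x
    rw [hval, Nat.add_mul_mod_self_right, Nat.mod_eq_of_lt x.1.isLt]
  rw [← Equiv.sum_comp e.symm (fun j => ((if (j:ℕ) % k = (μ:ℕ) then (1:ℂ) else 0) *
      (if (j:ℕ) % k = (ν:ℕ) then (1:ℂ) else 0)) * ((((g:ℕ):ℂ))⁻¹ * (pc j)^2)),
    Fintype.sum_prod_type]
  have hinner : ∀ μ' : Fin k,
      ∑ r : Fin g, ((if ((e.symm (μ', r) : Fin n):ℕ) % k = (μ:ℕ) then (1:ℂ) else 0) *
        (if ((e.symm (μ', r) : Fin n):ℕ) % k = (ν:ℕ) then (1:ℂ) else 0)) *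
        ((((g:ℕ):ℂ))⁻¹ * (pc (e.symm (μ', r)))^2)
      = ((if μ' = μ then (1:ℂ) else 0) * (if μ' = ν then (1:ℂ) else 0)) *
          ((((g:ℕ):ℂ))⁻¹ * ((sval n g k p μ' : ℝ) : ℂ)) := by
    intro μ'
    have hcond1 : ∀ r : Fin g, (((e.symm (μ', r) : Fin n):ℕ) % k = (μ:ℕ)) = (μ' = μ) := by
      intro r
      rw [hmod (μ', r)]
      simp [Fin.val_inj]
    have hcond2 : ∀ r : Fin g, (((e.symm (μ', r) : Fin n):ℕ) % k = (ν:ℕ)) = (μ' = ν) := by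
      intro r
      rw [hmod (μ', r)]
      simp [Fin.val_inj]
    have hpcval : ∀ r : Fin g, pc (e.symm (μ', r))
        = ((p (2 * Real.pi * (((μ':ℕ):ℝ) + ((r:ℕ):ℝ) * (k:ℝ)) / n) : ℝ) : ℂ) := by
      intro r
      have hcast : (((e.symm (μ', r) : Fin n):ℕ):ℝ) = ((μ':ℕ):ℝ) + ((r:ℕ):ℝ) * (k:ℝ) := by
        rw [hval (μ', r)]
        push_cast
        ring
      simp only [hpc, hcast]
    simp only [hcond1, hcond2, hpcval]
    rw [← Finset.mul_sum]
    congr 1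
    rw [← Finset.mul_sum]
    congr 1
    rw [sval]
    push_cast
    rfl
  rw [Finset.sum_congr rfl fun μ' _ => hinner μ']
  rw [Finset.sum_eq_single μ]
  · by_cases hμν : μ = ν
    · subst hμν
      simp [Matrix.diagonal_apply_eq]
    · rw [Matrix.diagonal_apply_ne _ hμν, if_pos rfl, if_neg hμν]
      ring
  · intro μ' _ hμ'
    rw [if_neg hμ']
    ring
  · intro h; exact absurd (Finset.mem_univ μ) h

lemma RSR (n g k : ℕ) (hg : 0 < g) (hk : 0 < k) (w : Fin k → ℂ) (i j : Fin n) :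
    (Rmat n g k * (Matrix.diagonal w * (Rmat n g k)ᴴ)) i j
      = if (i:ℕ) % k = (j:ℕ) % k then (((g:ℕ):ℂ))⁻¹ * w ⟨(i:ℕ) % k, Nat.mod_lt _ hk⟩
        else 0 := by
  have hcg : (((Real.sqrt g:ℝ):ℂ))⁻¹ * (((Real.sqrt g:ℝ):ℂ))⁻¹ = (((g:ℕ):ℂ))⁻¹ :=
    eq_inv_of_mul_eq_one_left (sqrt_inv_sq g hg)
  rw [Matrix.mul_apply]
  set μ0 : Fin k := ⟨(i:ℕ) % k, Nat.mod_lt _ hk⟩ with hμ0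
  rw [Finset.sum_eq_single μ0]
  · rw [Matrix.diagonal_mul, Rmat_conjT_apply]
    have h1 : Rmat n g k i μ0 = (((Real.sqrt g:ℝ):ℂ))⁻¹ := by
      simp only [Rmat, Matrix.of_apply]
      exact if_pos rfl
    rw [h1]
    simp only [Rmat, Matrix.of_apply]
    by_cases h2 : (j:ℕ) % k = ((μ0 : Fin k):ℕ)
    · rw [if_pos h2, if_pos]
      · rw [← hcg]; ring
      · rw [hμ0] at h2; exact h2.symm
    · rw [if_neg h2, if_neg]
      · ring
      · rw [hμ0] at h2; exact fun hc => h2 hc.symm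
  · intro μ _ hμ
    have : Rmat n g k i μ = 0 := by
      simp only [Rmat, Matrix.of_apply]
      rw [if_neg]
      intro hc
      exact hμ (Fin.ext (by rw [hμ0]; exact hc.symm))
    rw [this, zero_mul]
  · intro h; exact absurd (Finset.mem_univ μ0) h

lemma sval_ne_zero (n g k : ℕ) (hg : 0 < g) (hk : 0 < k) (hn : n = g * k) (p : ℝ → ℝ)
    (hrank : Function.Injective (circulantGenR n p * cuttingMatrix n g k).mulVec)
    (μ : Fin k) : sval n g k p μ ≠ 0 := by
  intro h0
  have hzero : ∀ r : Fin g, p (2 * Real.pi * (((μ:ℕ):ℝ) + ((r:ℕ):ℝ) * (k:ℝ)) / n) = 0 := by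
    intro r
    rw [sval] at h0
    have hsum := (Finset.sum_eq_zero_iff_of_nonneg (s := Finset.univ)
      (f := fun r : Fin g => (p (2 * Real.pi * (((μ:ℕ):ℝ) + ((r:ℕ):ℝ) * (k:ℝ)) / n))^2)
      (fun r _ => sq_nonneg _)).mp h0
    exact pow_eq_zero_iff (two_ne_zero) |>.mp (hsum r (Finset.mem_univ r))
  set v : Fin k → ℂ := fun l => Complex.exp (-(2 * (Real.pi:ℂ) * Complex.I * (μ:ℕ) * (l:ℕ) / k))
    with hv
  have hBv : (Gmat k).mulVec v = fun ν : Fin k => if ν = μ then (((Real.sqrt k:ℝ):ℂ))⁻¹ * k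
      else 0 := by
    funext ν
    simp only [Matrix.mulVec, dotProduct, Gmat, Matrix.of_apply, hv]
    have hterm : ∀ l : Fin k, (((Real.sqrt k:ℝ):ℂ))⁻¹ *
        Complex.exp (2 * (Real.pi:ℂ) * Complex.I * ν * l / k) *
        Complex.exp (-(2 * (Real.pi:ℂ) * Complex.I * (μ:ℕ) * (l:ℕ) / k))
        = (((Real.sqrt k:ℝ):ℂ))⁻¹ *
          Complex.exp (2 * (Real.pi:ℂ) * Complex.I * (((ν:ℤ) - (μ:ℤ) : ℤ):ℂ) * l / k) := by
      intro l
      rw [mul_assoc, ← Complex.exp_add]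
      congr 2
      push_cast
      ring
    rw [Finset.sum_congr rfl fun l _ => hterm l, ← Finset.mul_sum,
      sum_exp_orth k hk ((ν:ℤ) - (μ:ℤ))]
    by_cases hc : ν = μ
    · have hd : (k:ℤ) ∣ ((ν:ℤ) - (μ:ℤ)) := (fin_dvd_iff k μ ν).mpr hc.symm
      rw [if_pos hd, if_pos hc]
    · have hd : ¬ (k:ℤ) ∣ ((ν:ℤ) - (μ:ℤ)) := by
        rw [fin_dvd_iff k μ ν]
        exact fun h => hc h.symm
      rw [if_neg hd, if_neg hc, mul_zero]
  have hRu : (Rmat n g k).mulVec (fun ν : Fin k => if ν = μ then (((Real.sqrt k:ℝ):ℂ))⁻¹ * k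
      else 0) = fun j : Fin n => Rmat n g k j μ * ((((Real.sqrt k:ℝ):ℂ))⁻¹ * k) := by
    funext j
    simp only [Matrix.mulVec, dotProduct, mul_ite, mul_zero]
    rw [Finset.sum_ite_eq' Finset.univ μ]
    simp
  have hDu : (Dmat n p).mulVec (fun j : Fin n => Rmat n g k j μ *
      ((((Real.sqrt k:ℝ):ℂ))⁻¹ * k)) = 0 := by
    funext j
    simp only [Matrix.mulVec, dotProduct, Dmat, Matrix.diagonal_apply, ite_mul, zero_mul]
    rw [Finset.sum_ite_eq Finset.univ j]
    simp only [Finset.mem_univ, if_true, Pi.zero_apply]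
    by_cases hcond : (j:ℕ) % k = (μ:ℕ)
    · have hr : (j:ℕ) / k < g := by
        rw [Nat.div_lt_iff_lt_mul hk]
        exact hn ▸ j.isLt
      have harg : (((j:ℕ)):ℝ) = ((μ:ℕ):ℝ) + (((⟨(j:ℕ)/k, hr⟩ : Fin g):ℕ):ℝ) * (k:ℝ) := by
        push_cast
        rw [← hcond]
        exact_mod_cast (Nat.mod_add_div' (j:ℕ) k).symm
      have : p (2 * Real.pi * ((j:ℕ):ℝ) / n) = 0 := by
        rw [harg]
        exact hzero ⟨(j:ℕ)/k, hr⟩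
      rw [this]
      simp
    · have : Rmat n g k j μ = 0 := by
        simp only [Rmat, Matrix.of_apply]
        rw [if_neg hcond]
      rw [this]
      simp
  have hPv : (circulantGenR n p * cuttingMatrix n g k).mulVec v = 0 := by
    rw [factorP n g k hg hk hn p, ← Matrix.mulVec_mulVec, ← Matrix.mulVec_mulVec,
      ← Matrix.mulVec_mulVec, hBv, hRu, hDu, Matrix.mulVec_zero]
  have hv0 : v = 0 := hrank (hPv.trans (Matrix.mulVec_zero _).symm)
  have : v ⟨0, hk⟩ = 0 := by rw [hv0]; rfl
  rw [hv] at this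
  simp at this

theorem block_diagonalization_of_projector (n g k : ℕ) (hg : 2 ≤ g) (hk : 0 < k)
    (hn : n = g * k) (p : ℝ → ℝ) (hp : IsTrigPolyR p)
    (hrank : Function.Injective (circulantGenR n p * cuttingMatrix n g k).mulVec) :
    ∃ e : Fin n ≃ Fin k × Fin g, ∀ i j : Fin n,
      ((fourierMatrix n)ᴴ *
          ((1 : Matrix (Fin n) (Fin n) ℂ) -
            (circulantGenR n p * cuttingMatrix n g k) *
              ((circulantGenR n p * cuttingMatrix n g k)ᴴ *
                (circulantGenR n p * cuttingMatrix n g k))⁻¹ *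
              (circulantGenR n p * cuttingMatrix n g k)ᴴ) *
          fourierMatrix n) i j =
        if (e i).1 = (e j).1 then
          ((((if (e i).2 = (e j).2 then (1 : ℝ) else 0) -
              p (2 * Real.pi * (((e i).1 : ℕ) + ((e i).2 : ℕ) * k) / n) *
                p (2 * Real.pi * (((e j).1 : ℕ) + ((e j).2 : ℕ) * k) / n) /
                  ∑ r : Fin g, (p (2 * Real.pi * (((e i).1 : ℕ) + (r : ℕ) * k) / n))^2 : ℝ)) : ℂ)
        else 0 := by
  have hg0 : 0 < g := lt_of_lt_of_le two_pos hg
  have hn0 : 0 < n := hn ▸ Nat.mul_pos hg0 hk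
  have hgC : ((g:ℕ):ℂ) ≠ 0 := by exact_mod_cast hg0.ne'
  set F := fourierMatrix n with hF
  set B := Gmat k with hB
  set R := Rmat n g k with hR
  set D := Dmat n p with hD
  set P := circulantGenR n p * cuttingMatrix n g k with hP
  refine ⟨(finCongr hn).trans (splitIdx g k hg0 hk), fun i j => ?_⟩
  set e := (finCongr hn).trans (splitIdx g k hg0 hk) with he
  -- basic unitarity facts
  have hFHF : Fᴴ * F = 1 := by
    rw [hF, fourier_eq_Gmat, Matrix.conjTranspose_conjTranspose]
    exact Gmat_mul_conjT n hn0
  have hBBH : B * Bᴴ = 1 := Gmat_mul_conjT k hk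
  have hBHB : Bᴴ * B = 1 := conjT_mul_Gmat k hk
  have hDH : Dᴴ = D := by
    rw [hD]
    show (Matrix.diagonal fun j : Fin n => ((p (2 * Real.pi * (j:ℕ) / n) : ℝ) : ℂ))ᴴ = Dmat n p
    rw [Matrix.diagonal_conjTranspose]
    unfold Dmat
    exact congrArg Matrix.diagonal (funext fun j => by
      rw [Pi.star_apply, Complex.star_def, Complex.conj_ofReal])
  have hfac : P = F * (D * (R * B)) := factorP n g k hg0 hk hn p
  clear_value P
  have hFP : Fᴴ * P = D * (R * B) := by
    rw [hfac, ← Matrix.mul_assoc, hFHF, Matrix.one_mul]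
  have hPF : Pᴴ * F = (Bᴴ * Rᴴ) * D := by
    have h1 : Pᴴ * F = (Fᴴ * P)ᴴ := by
      rw [Matrix.conjTranspose_mul, Matrix.conjTranspose_conjTranspose]
    rw [h1, hFP, Matrix.conjTranspose_mul, Matrix.conjTranspose_mul, hDH]
  set w : Fin k → ℂ := fun μ => (((g:ℕ):ℂ))⁻¹ * ((sval n g k p μ : ℝ) : ℂ) with hw
  set w' : Fin k → ℂ := fun μ => ((g:ℕ):ℂ) * (((sval n g k p μ : ℝ) : ℂ))⁻¹ with hw'
  have hrank' : Function.Injective (circulantGenR n p * cuttingMatrix n g k).mulVec :=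
    hP ▸ hrank
  have hsne : ∀ μ : Fin k, ((sval n g k p μ : ℝ) : ℂ) ≠ 0 := fun μ => by
    simpa using sval_ne_zero n g k hg0 hk hn p hrank' μ
  have hM : Pᴴ * P = Bᴴ * (Matrix.diagonal w * B) := by
    have h1 : Pᴴ * P = (Pᴴ * F) * (D * (R * B)) := by
      rw [Matrix.mul_assoc, ← hfac]
    rw [h1, hPF, hw, hR, hD, hB, ← RDDR n g k hg0 hk hn p]
    simp only [Matrix.mul_assoc]
  have hww : Matrix.diagonal w * Matrix.diagonal w' = 1 := by
    rw [Matrix.diagonal_mul_diagonal, ← Matrix.diagonal_one]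
    refine congrArg Matrix.diagonal (funext fun μ => ?_)
    show w μ * w' μ = 1
    simp only [hw, hw']
    have hs := hsne μ
    field_simp
  have hMinv : (Pᴴ * P)⁻¹ = Bᴴ * (Matrix.diagonal w' * B) := by
    apply Matrix.inv_eq_right_inv
    rw [hM]
    have h2 : Bᴴ * (Matrix.diagonal w * B) * (Bᴴ * (Matrix.diagonal w' * B))
        = Bᴴ * (Matrix.diagonal w * ((B * Bᴴ) * (Matrix.diagonal w' * B))) := by
      simp only [Matrix.mul_assoc]
    rw [h2, hBBH, Matrix.one_mul, ← Matrix.mul_assoc (Matrix.diagonal w), hww,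
      Matrix.one_mul, hBHB]
  have hT : Fᴴ * ((1 : Matrix (Fin n) (Fin n) ℂ) - P * (Pᴴ * P)⁻¹ * Pᴴ) * F
      = 1 - D * ((R * (Matrix.diagonal w' * Rᴴ)) * D) := by
    rw [Matrix.mul_sub, Matrix.sub_mul, Matrix.mul_one, hFHF]
    congr 1
    have h3 : Fᴴ * (P * (Pᴴ * P)⁻¹ * Pᴴ) * F = (Fᴴ * P) * ((Pᴴ * P)⁻¹ * (Pᴴ * F)) := by
      simp only [Matrix.mul_assoc]
    rw [h3, hFP, hMinv, hPF]
    have h4 : D * (R * B) * (Bᴴ * (Matrix.diagonal w' * B) * (Bᴴ * Rᴴ * D))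
        = D * (R * ((B * Bᴴ) * (Matrix.diagonal w' * ((B * Bᴴ) * (Rᴴ * D))))) := by
      simp only [Matrix.mul_assoc]
    rw [h4, hBBH, Matrix.one_mul, Matrix.one_mul]
    simp only [Matrix.mul_assoc]
  rw [hT]
  -- entrywise
  have hRSR := RSR n g k hg0 hk w' i j
  rw [← hR] at hRSR
  have hentry : (D * ((R * (Matrix.diagonal w' * Rᴴ)) * D)) i j
      = ((p (2 * Real.pi * (i:ℕ) / n) : ℝ) : ℂ) *
        ((R * (Matrix.diagonal w' * Rᴴ)) i j * ((p (2 * Real.pi * (j:ℕ) / n) : ℝ) : ℂ)) := by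
    rw [hD]
    unfold Dmat
    rw [Matrix.diagonal_mul, Matrix.mul_diagonal]
  rw [Matrix.sub_apply, hentry, hRSR]
  -- index facts
  have f1i : (((e i).1 : Fin k) : ℕ) = (i:ℕ) % k := rfl
  have f1j : (((e j).1 : Fin k) : ℕ) = (j:ℕ) % k := rfl
  have f2i : (((e i).2 : Fin g) : ℕ) = (i:ℕ) / k := rfl
  have f2j : (((e j).2 : Fin g) : ℕ) = (j:ℕ) / k := rfl
  have hcond : ((i:ℕ) % k = (j:ℕ) % k) ↔ ((e i).1 = (e j).1) := by
    rw [← f1i, ← f1j, Fin.val_inj]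
  have hargi : p (2 * Real.pi * ((((e i).1 : ℕ):ℝ) + (((e i).2 : ℕ):ℝ) * (k:ℝ)) / n)
      = p (2 * Real.pi * ((i:ℕ):ℝ) / n) := by
    have harg : (((e i).1 : ℕ):ℝ) + (((e i).2 : ℕ):ℝ) * (k:ℝ) = ((i:ℕ):ℝ) := by
      rw [f1i, f2i]
      exact_mod_cast Nat.mod_add_div' (i:ℕ) k
    rw [harg]
  have hargj : p (2 * Real.pi * ((((e j).1 : ℕ):ℝ) + (((e j).2 : ℕ):ℝ) * (k:ℝ)) / n)
      = p (2 * Real.pi * ((j:ℕ):ℝ) / n) := by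
    have harg : (((e j).1 : ℕ):ℝ) + (((e j).2 : ℕ):ℝ) * (k:ℝ) = ((j:ℕ):ℝ) := by
      rw [f1j, f2j]
      exact_mod_cast Nat.mod_add_div' (j:ℕ) k
    rw [harg]
  have hsv : (∑ r : Fin g, (p (2 * Real.pi * ((((e i).1 : ℕ):ℝ) + ((r : ℕ):ℝ) * (k:ℝ)) / n))^2)
      = sval n g k p (e i).1 := rfl
  have hμ0 : (⟨(i:ℕ) % k, Nat.mod_lt _ hk⟩ : Fin k) = (e i).1 := by
    apply Fin.ext
    rw [f1i]
  by_cases hc : (e i).1 = (e j).1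
  · rw [if_pos hc, if_pos ((hcond).mpr hc), hμ0]
    have hval : (((g:ℕ):ℂ))⁻¹ * w' (e i).1 = (((sval n g k p (e i).1 : ℝ) : ℂ))⁻¹ := by
      rw [hw']
      field_simp
    rw [hval]
    by_cases hij : i = j
    · subst hij
      rw [Matrix.one_apply_eq, if_pos rfl, hargi, hsv]
      push_cast
      have := hsne (e i).1
      field_simp
    · have hr2 : (e i).2 ≠ (e j).2 := by
        intro h2
        exact hij (e.injective (Prod.ext hc h2))
      rw [Matrix.one_apply_ne hij, if_neg hr2, hargi, hargj, hsv]
      push_cast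
      ring
  · have hij : i ≠ j := by
      intro h
      subst h
      exact hc rfl
    rw [if_neg hc, if_neg (fun h => hc (hcond.mp h)), Matrix.one_apply_ne hij]
    simp
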